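/- For each N ≥ 1 there is a constant C_N > 0 such that for all r ∈ ℝ and all λ ∈ ℂ, |G_N(rλ)| ≤ C_N e^{|r| |Im λ|}, where G_N(s) = 1 + Σ_{m=1}^∞ (-1)^m s^{2m} / (2^m m! ∏_{k=1}^m (N + 2(k-1))). -/

import Mathlib

set_option autoImplicit false

/-- The Frobenius power-series solution `G_N`, as an entire function of a
complex variable. -/
noncomputable def Gc (N : ℕ) (s : ℂ) : ℂ :=
  ∑' m : ℕ, ((-1) ^ m * s ^ (2 * m)) /
    ((2 : ℂ) ^ m * (Nat.factorial m) * ∏ k ∈ Finset.range m, ((N : ℂ) + 2 * k))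

open MeasureTheory intervalIntegral Real


noncomputable def J (n m : ℕ) : ℝ :=
  ∫ θ in (0:ℝ)..(π/2), Real.sin θ ^ n * Real.cos θ ^ (2*m)

lemma J_cont (n j : ℕ) : Continuous fun θ : ℝ => Real.sin θ ^ n * Real.cos θ ^ j := by
  fun_prop

lemma J_pos (n m : ℕ) : 0 < J n m := by
  apply intervalIntegral.intervalIntegral_pos_of_pos_on
  · exact (J_cont n (2*m)).intervalIntegrable _ _
  · intro x hx
    obtain ⟨h0, h1⟩ := hx
    have hs : 0 < Real.sin x := Real.sin_pos_of_pos_of_lt_pi h0 (lt_trans h1 (by linarith [pi_pos]))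
    have hc : 0 < Real.cos x := Real.cos_pos_of_mem_Ioo ⟨by linarith [pi_pos], h1⟩
    positivity
  · positivity

-- recurrence
lemma J_rec (n m : ℕ) : (n + 2*m + 2 : ℝ) * J n (m+1) = (2*m+1) * J n m := by
  have key : ∫ θ in (0:ℝ)..(π/2),
      (-(2*(m:ℝ)+1) * (Real.sin θ ^ n * Real.cos θ ^ (2*m))
        + ((n:ℝ) + 2*m + 2) * (Real.sin θ ^ n * Real.cos θ ^ (2*(m+1)))) =
      (fun θ => Real.cos θ ^ (2*m+1) * Real.sin θ ^ (n+1)) (π/2)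
        - (fun θ => Real.cos θ ^ (2*m+1) * Real.sin θ ^ (n+1)) 0 := by
    refine intervalIntegral.integral_eq_sub_of_hasDerivAt (f := fun θ => Real.cos θ ^ (2*m+1) * Real.sin θ ^ (n+1)) ?_ ?_
    · intro x hx
      have h1 : HasDerivAt (fun θ : ℝ => Real.cos θ ^ (2*m+1))
          ((2*m+1 : ℕ) * Real.cos x ^ (2*m) * (-Real.sin x)) x :=
        (Real.hasDerivAt_cos x).pow _
      have h2 : HasDerivAt (fun θ : ℝ => Real.sin θ ^ (n+1))
          ((n+1 : ℕ) * Real.sin x ^ n * Real.cos x) x :=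
        (Real.hasDerivAt_sin x).pow _
      have := h1.mul h2
      refine this.congr_deriv ?_
      have hs : Real.sin x ^ (n+2) = Real.sin x ^ n * (1 - Real.cos x ^ 2) := by
        rw [show (1 : ℝ) - Real.cos x ^ 2 = Real.sin x ^ 2 by
          have := Real.sin_sq_add_cos_sq x; linarith]
        ring
      push_cast
      linear_combination (-((2*(m:ℝ)+1) * Real.cos x ^ (2*m))) * hs
    · apply Continuous.intervalIntegrable
      fun_prop
  simp only [Real.cos_pi_div_two, Real.sin_zero] at key
  rw [zero_pow (by omega), zero_pow (by omega), zero_mul, mul_zero, sub_zero] at key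
  rw [intervalIntegral.integral_add, intervalIntegral.integral_const_mul,
      intervalIntegral.integral_const_mul] at key
  · unfold J
    nlinarith [key]
  · exact (continuous_const.mul (J_cont n (2*m))).intervalIntegrable _ _
  · exact (continuous_const.mul (J_cont n (2*(m+1)))).intervalIntegrable _ _

lemma J_prod (n m : ℕ) :
    J n m = J n 0 * ∏ k ∈ Finset.range m, ((2*k+1 : ℝ) / (n + 2*k + 2)) := by
  induction m with
  | zero => simp
  | succ m ih =>
    have h := J_rec n m
    have hne : ((n:ℝ) + 2*m + 2) ≠ 0 := by positivity
    rw [Finset.prod_range_succ, ← mul_assoc, ← ih]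
    push_cast at h ⊢
    field_simp
    linarith [h]

lemma fact_id (m : ℕ) : (2*m).factorial = 2^m * m.factorial * ∏ k ∈ Finset.range m, (2*k+1) := by
  induction m with
  | zero => simp
  | succ m ih =>
    simp only [Finset.prod_range_succ, show 2*(m+1) = (2*m+1)+1 from by ring,
      Nat.factorial_succ, ih]
    ring

lemma abs_cos_le (z : ℂ) : ‖Complex.cos z‖ ≤ Real.exp |z.im| := by
  rw [Complex.cos]
  calc ‖(Complex.exp (z*Complex.I) + Complex.exp (-z*Complex.I))/2‖
      ≤ (‖Complex.exp (z*Complex.I)‖ + ‖Complex.exp (-z*Complex.I)‖)/2 := by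
        rw [norm_div]
        gcongr
        · exact norm_add_le _ _
        · simp
    _ ≤ Real.exp |z.im| := by
        rw [Complex.norm_exp, Complex.norm_exp]
        simp only [Complex.mul_re, Complex.I_re, Complex.I_im, Complex.neg_re, Complex.neg_im]
        have h1 : Real.exp (z.re * 0 - z.im * 1) ≤ Real.exp |z.im| := by
          apply Real.exp_le_exp.2
          have := neg_abs_le z.im
          linarith
        have h2 : Real.exp (-z.re * 0 - -z.im * 1) ≤ Real.exp |z.im| := by
          apply Real.exp_le_exp.2
          have := le_abs_self z.im
          linarith
        linarith

lemma J_def (n m : ℕ) : J n m = ∫ θ in (0:ℝ)..(π/2), Real.sin θ ^ n * Real.cos θ ^ (2*m) := rfl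

lemma Gc_repr (n : ℕ) (s : ℂ) :
    (J n 0 : ℂ) * Gc (n+2) s =
      ∫ θ in Set.Ioc (0:ℝ) (π/2), (Real.sin θ ^ n : ℂ) * Complex.cos (s * Real.cos θ) := by
  have hpi : (0:ℝ) ≤ π/2 := by positivity
  set c : ℕ → ℂ := fun m => (-1)^m * s^(2*m) / ((2*m).factorial : ℂ) with hc
  set F : ℕ → ℝ → ℂ :=
    fun m θ => c m * ((Real.sin θ ^ n * Real.cos θ ^ (2*m) : ℝ) : ℂ) with hF
  have hint : ∀ m, IntegrableOn (F m) (Set.Ioc (0:ℝ) (π/2)) := by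
    intro m
    apply Continuous.integrableOn_Ioc
    fun_prop
  have hcnorm : ∀ m, ‖c m‖ = ‖s‖^(2*m) / ((2*m).factorial : ℝ) := by
    intro m
    simp [hc, norm_div, norm_pow, abs_of_nonneg]
  have hsum : Summable fun m => ∫ θ in Set.Ioc (0:ℝ) (π/2), ‖F m θ‖ := by
    have hbig : Summable fun m : ℕ => ‖s‖^(2*m) / ((2*m).factorial : ℝ) * (π/2) := by
      apply Summable.mul_right
      exact (Real.summable_pow_div_factorial ‖s‖).comp_injective
        (fun a b hab => by omega)
    apply Summable.of_nonneg_of_le (fun m => integral_nonneg (fun θ => norm_nonneg _)) _ hbig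
    intro m
    calc (∫ θ in Set.Ioc (0:ℝ) (π/2), ‖F m θ‖)
        ≤ ∫ _ in Set.Ioc (0:ℝ) (π/2), ‖c m‖ := by
          apply setIntegral_mono_on (hint m).norm (integrableOn_const (by
            rw [Real.volume_Ioc]; exact ENNReal.ofReal_ne_top)) measurableSet_Ioc
          intro θ hθ
          rw [hF]
          simp only [norm_mul]
          have h1 : |Real.sin θ| ≤ 1 := Real.abs_sin_le_one θ
          have h2 : |Real.cos θ| ≤ 1 := Real.abs_cos_le_one θ
          have hb : ‖((Real.sin θ ^ n * Real.cos θ ^ (2*m) : ℝ) : ℂ)‖ ≤ 1 := by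
            rw [Complex.norm_real, Real.norm_eq_abs, abs_mul, abs_pow, abs_pow]
            exact mul_le_one₀ (pow_le_one₀ (abs_nonneg _) h1)
              (pow_nonneg (abs_nonneg _) _) (pow_le_one₀ (abs_nonneg _) h2)
          calc ‖c m‖ * ‖((Real.sin θ ^ n * Real.cos θ ^ (2*m) : ℝ) : ℂ)‖
              ≤ ‖c m‖ * 1 := by gcongr
            _ = ‖c m‖ := mul_one _
      _ = ‖c m‖ * (π/2) := by
          rw [setIntegral_const, Real.volume_real_Ioc_of_le hpi, smul_eq_mul, mul_comm]
          ring_nf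
      _ = ‖s‖^(2*m) / ((2*m).factorial : ℝ) * (π/2) := by rw [hcnorm]
  have hpt : ∀ θ : ℝ, (Real.sin θ ^ n : ℂ) * Complex.cos (s * Real.cos θ) = ∑' m, F m θ := by
    intro θ
    rw [Complex.cos_eq_tsum, ← tsum_mul_left]
    congr 1
    funext m
    rw [hF, hc]
    push_cast
    ring
  have key := MeasureTheory.integral_tsum_of_summable_integral_norm hint hsum
  have hterm : ∀ m, (∫ θ in Set.Ioc (0:ℝ) (π/2), F m θ) = c m * (J n m : ℂ) := by
    intro m
    simp only [hF]
    rw [MeasureTheory.integral_const_mul]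
    congr 1
    rw [J_def n m, intervalIntegral.integral_of_le hpi]
    exact _root_.integral_ofReal
  calc (J n 0 : ℂ) * Gc (n+2) s
      = ∑' m, c m * (J n m : ℂ) := by
        rw [Gc, ← tsum_mul_left]
        congr 1
        funext m
        simp only [hc, J_prod n m]
        have hfc : ((2*m).factorial : ℂ) =
            2^m * (m.factorial : ℂ) * ∏ k ∈ Finset.range m, (2*(k:ℂ)+1) := by
          rw [fact_id m]
          push_cast
          ring
        have hP : (∏ k ∈ Finset.range m, (((n+2 : ℕ) : ℂ) + 2*(k:ℂ))) =
            ∏ k ∈ Finset.range m, ((n:ℂ) + 2*(k:ℂ) + 2) := by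
          apply Finset.prod_congr rfl
          intro k _
          push_cast
          ring
        have h3 : (∏ k ∈ Finset.range m, ((n:ℂ) + 2*(k:ℂ) + 2)) ≠ 0 := by
          rw [Finset.prod_ne_zero_iff]
          intro k _
          exact_mod_cast (by positivity : ((n:ℝ) + 2*(k:ℝ) + 2) ≠ 0)
        have h4 : (∏ k ∈ Finset.range m, (2*(k:ℂ)+1)) ≠ 0 := by
          rw [Finset.prod_ne_zero_iff]
          intro k _
          exact_mod_cast (by positivity : (2*(k:ℝ)+1) ≠ 0)
        have h2 : ((m.factorial : ℂ)) ≠ 0 := by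
          exact_mod_cast m.factorial_ne_zero
        rw [hP, hfc]
        push_cast
        rw [Finset.prod_div_distrib]
        field_simp
      _ = ∑' m, ∫ θ in Set.Ioc (0:ℝ) (π/2), F m θ := by
        exact tsum_congr fun m => (hterm m).symm
      _ = ∫ θ in Set.Ioc (0:ℝ) (π/2), ∑' m, F m θ := key
      _ = ∫ θ in Set.Ioc (0:ℝ) (π/2), (Real.sin θ ^ n : ℂ) * Complex.cos (s * Real.cos θ) := by
        exact setIntegral_congr_fun measurableSet_Ioc fun θ _ => (hpt θ).symm

lemma Gc_bound (n : ℕ) (s : ℂ) : ‖Gc (n+2) s‖ ≤ Real.exp |s.im| := by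
  have hpi : (0:ℝ) ≤ π/2 := by positivity
  have hJ := J_pos n 0
  have h0 : ‖(J n 0 : ℂ) * Gc (n+2) s‖ ≤ J n 0 * Real.exp |s.im| := by
    rw [Gc_repr]
    calc ‖∫ θ in Set.Ioc (0:ℝ) (π/2), (Real.sin θ ^ n : ℂ) * Complex.cos (s * Real.cos θ)‖
        ≤ ∫ θ in Set.Ioc (0:ℝ) (π/2), ‖(Real.sin θ ^ n : ℂ) * Complex.cos (s * Real.cos θ)‖ :=
          norm_integral_le_integral_norm _
      _ ≤ ∫ θ in Set.Ioc (0:ℝ) (π/2), Real.sin θ ^ n * Real.exp |s.im| := by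
          apply setIntegral_mono_on
          · apply Integrable.norm
            apply Continuous.integrableOn_Ioc
            fun_prop
          · apply Continuous.integrableOn_Ioc
            fun_prop
          · exact measurableSet_Ioc
          · intro θ hθ
            rw [norm_mul]
            have hs0 : 0 ≤ Real.sin θ :=
              Real.sin_nonneg_of_nonneg_of_le_pi (le_of_lt hθ.1)
                (le_trans hθ.2 (by linarith [pi_pos]))
            have h1 : ‖((Real.sin θ : ℂ)) ^ n‖ = Real.sin θ ^ n := by
              rw [norm_pow, Complex.norm_real, Real.norm_eq_abs, abs_of_nonneg hs0]
            rw [h1]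
            have h2 := abs_cos_le (s * Real.cos θ)
            refine mul_le_mul_of_nonneg_left (le_trans h2 ?_) (by positivity)
            apply Real.exp_le_exp.2
            have h3 : (s * (Real.cos θ : ℂ)).im = s.im * Real.cos θ := by
              rw [Complex.mul_im, Complex.ofReal_re, Complex.ofReal_im]
              ring
            rw [h3, abs_mul]
            have h4 : |Real.cos θ| ≤ 1 := Real.abs_cos_le_one θ
            nlinarith [abs_nonneg s.im]
      _ = (∫ θ in Set.Ioc (0:ℝ) (π/2), Real.sin θ ^ n) * Real.exp |s.im| :=
          MeasureTheory.integral_mul_const _ _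
      _ = J n 0 * Real.exp |s.im| := by
          congr 1
          rw [J_def n 0, intervalIntegral.integral_of_le hpi]
          apply setIntegral_congr_fun measurableSet_Ioc
          intro θ _
          simp
  rw [norm_mul, Complex.norm_real, Real.norm_eq_abs, abs_of_pos hJ] at h0
  calc ‖Gc (n+2) s‖ = (J n 0 * ‖Gc (n+2) s‖) / J n 0 := by field_simp
    _ ≤ (J n 0 * Real.exp |s.im|) / J n 0 := by gcongr
    _ = Real.exp |s.im| := by field_simp

lemma Gc_one (s : ℂ) : Gc 1 s = Complex.cos s := by
  rw [Gc, Complex.cos_eq_tsum]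
  apply tsum_congr
  intro m
  have hfc : ((2*m).factorial : ℂ) =
      2^m * (m.factorial : ℂ) * ∏ k ∈ Finset.range m, (2*(k:ℂ)+1) := by
    rw [fact_id m]
    push_cast
    ring
  rw [hfc]
  congr 2
  exact Finset.prod_congr rfl fun k _ => by push_cast; ring

/-- Exponential bound: `|G_N(rλ)| ≤ C_N e^{|r| |Im λ|}` for all real `r` and
complex `λ`. -/
theorem stmt9 (N : ℕ) (hN : 1 ≤ N) :
    ∃ C : ℝ, 0 < C ∧ ∀ (r : ℝ) (lam : ℂ),
      ‖Gc N (r * lam)‖ ≤ C * Real.exp (|r| * |lam.im|) := by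
  refine ⟨1, one_pos, fun r lam => ?_⟩
  rw [one_mul]
  have habs : |((r:ℂ)*lam).im| = |r| * |lam.im| := by
    rw [show ((r:ℂ)*lam).im = r * lam.im by simp, abs_mul]
  rcases Nat.lt_or_ge N 2 with h2 | h2
  · have hN1 : N = 1 := by omega
    subst hN1
    rw [Gc_one]
    calc ‖Complex.cos ((r:ℂ)*lam)‖ ≤ Real.exp |((r:ℂ)*lam).im| := abs_cos_le _
      _ = _ := by rw [habs]
  · obtain ⟨n, rfl⟩ : ∃ n, N = n + 2 := ⟨N - 2, by omega⟩
    calc ‖Gc (n+2) ((r:ℂ)*lam)‖ ≤ Real.exp |((r:ℂ)*lam).im| := Gc_bound n _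
      _ = _ := by rw [habs]
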